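/- Let L be a complete lattice satisfying the modular law. Then L satisfies condition (1) of strict modularity: for all a, b ∈ L and every subset C ⊆ L such that a is a lower bound of C, one has L(U(a,b) ∪ C) = L(U({a} ∪ L({b} ∪ C))). -/
import Mathlib


/-- A complete modular lattice satisfies condition (1) of strict
modularity. -/
theorem stmt_5 {L : Type*} [CompleteLattice L]
    (hmod : ∀ x y z : L, x ≤ z → (x ⊔ y) ⊓ z = x ⊔ (y ⊓ z)) :
    ∀ (a b : L) (C : Set L), a ∈ lowerBounds C →
      lowerBounds (upperBounds {a, b} ∪ C) =
        lowerBounds (upperBounds ({a} ∪ lowerBounds ({b} ∪ C))) := by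
  intro a b C haC
  have hbC : lowerBounds ({b} ∪ C) = Set.Iic (b ⊓ sInf C) := by
    ext x
    simp [lowerBounds, Set.mem_Iic, le_inf_iff, le_sInf_iff]
  have hLHS : lowerBounds (upperBounds {a, b} ∪ C) = Set.Iic ((a ⊔ b) ⊓ sInf C) := by
    ext x
    constructor
    · intro hx
      have h1 : x ≤ a ⊔ b := hx (Or.inl (isLUB_pair (a := a) (b := b)).1)
      have h2 : x ≤ sInf C := le_sInf fun c hc => hx (Or.inr hc)
      exact le_inf h1 h2
    · intro hx y hy
      rcases hy with hy | hy
      · exact le_trans (le_trans hx inf_le_left) ((isLUB_pair (a := a) (b := b)).2 hy)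
      · exact le_trans (le_trans hx inf_le_right) (sInf_le hy)
  have hRHS : lowerBounds (upperBounds ({a} ∪ lowerBounds ({b} ∪ C))) =
      Set.Iic (a ⊔ (b ⊓ sInf C)) := by
    rw [hbC]
    ext x
    constructor
    · intro hx
      refine hx ?_
      rintro y (hy | hy)
      · simp only [Set.mem_singleton_iff] at hy
        exact hy ▸ le_sup_left
      · exact le_trans hy le_sup_right
    · intro hx y hy
      have h1 : a ≤ y := hy (Or.inl rfl)
      have h2 : b ⊓ sInf C ≤ y := hy (Or.inr (le_refl _))
      exact le_trans hx (sup_le h1 h2)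
  rw [hLHS, hRHS, hmod a b (sInf C) (le_sInf haC)]
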